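/- Define BSize_n(k,λ) = 2^(-n)·(Σ_{i=0}^{k-1} C(n,i) + λ·C(n,k)) for k ∈ {0,...,n} and λ ∈ [0,1). For any nonempty set A ⊆ {0,1}^n, if (k,λ) = BSize^{-1}(vol(A)) — i.e., vol(A) = BSize_n(k,λ) — then for every r ≥ 0 the r-expansion A_r = { x : ∃a ∈ A, HD(x,a) ≤ r } satisfies vol(A_r) ≥ BSize_n(k+r, λ). -/

import Mathlib

open Finset

/-- The volume of a (partial) Hamming ball of parameters `(k, λ)` in `{0,1}^n`. -/
noncomputable def BSize (n k : ℕ) (lam : ℝ) : ℝ :=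
  ((2 : ℝ) ^ n)⁻¹ * (∑ i ∈ Finset.range k, (n.choose i : ℝ) + lam * (n.choose k : ℝ))

noncomputable def bb (n k : ℕ) (lam : ℝ) : ℝ :=
  (∑ i ∈ Finset.range k, (n.choose i : ℝ)) + lam * (n.choose k : ℝ)

lemma sum_choose_pascal (d k : ℕ) :
    ∑ i ∈ range (k+1), (d+1).choose i
      = (∑ i ∈ range (k+1), d.choose i) + ∑ i ∈ range k, d.choose i := by
  induction k with
  | zero => simp
  | succ k ih =>
      rw [sum_range_succ, ih, sum_range_succ (fun i => d.choose i) (k+1),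
        sum_range_succ (fun i => d.choose i) k, Nat.choose_succ_succ']
      ring

lemma bb_pascal (d k : ℕ) (lam : ℝ) :
    bb (d+1) (k+1) lam = bb d (k+1) lam + bb d k lam := by
  unfold bb
  have h1 : (∑ i ∈ range (k+1), ((d+1).choose i : ℝ))
      = (∑ i ∈ range (k+1), (d.choose i : ℝ)) + ∑ i ∈ range k, (d.choose i : ℝ) := by
    have := sum_choose_pascal d k
    exact_mod_cast congrArg (Nat.cast : ℕ → ℝ) this
  have h2 : ((d+1).choose (k+1) : ℝ) = d.choose (k+1) + d.choose k := by
    rw [Nat.choose_succ_succ']; push_cast; ring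
  rw [h1, h2]; ring

lemma bb_nonneg (n k : ℕ) {lam : ℝ} (h : 0 ≤ lam) : 0 ≤ bb n k lam := by
  unfold bb; positivity

lemma choose_logconcave (d j : ℕ) :
    d.choose j * d.choose (j+2) ≤ d.choose (j+1) * d.choose (j+1) := by
  have h1 : d.choose (j+1) * (j+1) = d.choose j * (d - j) := Nat.choose_succ_right_eq d j
  have h2 : d.choose (j+2) * (j+2) = d.choose (j+1) * (d - (j+1)) := Nat.choose_succ_right_eq d (j+1)
  have key : (d.choose j * d.choose (j+2)) * ((j+1)*(j+2))
      ≤ (d.choose (j+1) * d.choose (j+1)) * ((j+1)*(j+2)) := by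
    calc (d.choose j * d.choose (j+2)) * ((j+1)*(j+2))
        = (d.choose j * (j+1)) * (d.choose (j+2) * (j+2)) := by ring
      _ = (d.choose j * (j+1)) * (d.choose (j+1) * (d - (j+1))) := by rw [h2]
      _ = (d.choose (j+1) * (j+1)) * (d.choose j * (d-(j+1))) := by ring
      _ = (d.choose j * (d-j)) * (d.choose j * (d-(j+1))) := by rw [h1]
      _ ≤ (d.choose j * (d-j)) * (d.choose j * (d-j)) := by
          exact Nat.mul_le_mul_left _ (Nat.mul_le_mul_left _ (Nat.sub_le_sub_left (Nat.le_succ j) d))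
      _ = (d.choose (j+1) * (j+1)) * (d.choose (j+1) * (j+1)) := by rw [h1]
      _ = (d.choose (j+1) * d.choose (j+1)) * ((j+1)*(j+1)) := by ring
      _ ≤ (d.choose (j+1) * d.choose (j+1)) * ((j+1)*(j+2)) := by
          exact Nat.mul_le_mul_left _ (Nat.mul_le_mul_left _ (Nat.le_succ _))
  exact Nat.le_of_mul_le_mul_right key (by positivity)

lemma choose_logconcave_real (d j : ℕ) :
    (d.choose j : ℝ) * d.choose (j+2) ≤ (d.choose (j+1) : ℝ) * d.choose (j+1) := by
  exact_mod_cast choose_logconcave d j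

/-- The numeric key lemma for Harper's induction step. -/
lemma key (d k : ℕ) (lam mB mT NB NT : ℝ)
    (hl0 : 0 ≤ lam) (hl1 : lam < 1)
    (hmB1 : 1 ≤ mB) (hmT0 : mT = 0 ∨ 1 ≤ mT) (hTB : mT ≤ mB)
    (hsum : bb (d+1) k lam ≤ mB + mT)
    (ihB : ∀ κ : ℕ, ∀ μ : ℝ, 0 ≤ μ → μ < 1 → bb d κ μ ≤ mB → bb d (κ+1) μ ≤ NB)
    (ihT : 1 ≤ mT → ∀ κ : ℕ, ∀ μ : ℝ, 0 ≤ μ → μ < 1 → bb d κ μ ≤ mT → bb d (κ+1) μ ≤ NT) :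
    bb (d+1) (k+1) lam ≤ max NB mT + max NT mB := by
  rw [bb_pascal]
  by_cases hI : bb d k lam ≤ mB
  · have h1 := ihB k lam hl0 hl1 hI
    have h2 := le_max_left NB mT
    have h3 := le_max_right NT mB
    linarith
  · push_neg at hI
    obtain ⟨j, rfl⟩ : ∃ j, k = j + 1 := by
      rcases Nat.eq_zero_or_pos k with h | h
      · exfalso; subst h
        have : bb d 0 lam = lam := by simp [bb]
        rw [this] at hI; linarith
      · exact ⟨k - 1, (Nat.succ_pred_eq_of_pos h).symm⟩
    set c0 : ℝ := (d.choose j : ℝ) with hc0d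
    set c1 : ℝ := (d.choose (j+1) : ℝ) with hc1d
    set c2 : ℝ := (d.choose (j+2) : ℝ) with hc2d
    set S0 : ℝ := ∑ i ∈ range j, (d.choose i : ℝ) with hS0d
    have hS1 : ∑ i ∈ range (j+1), (d.choose i : ℝ) = S0 + c0 := by
      rw [sum_range_succ]
    have hS2 : ∑ i ∈ range (j+2), (d.choose i : ℝ) = S0 + c0 + c1 := by
      rw [sum_range_succ, hS1]
    have hc0 : 0 ≤ c0 := by positivity
    have hc1 : 0 ≤ c1 := by positivity
    have hc2 : 0 ≤ c2 := by positivity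
    have hS0 : 0 ≤ S0 := by positivity
    have hlc : c0 * c2 ≤ c1 * c1 := choose_logconcave_real d j
    have hbbk : bb d (j+1) lam = S0 + c0 + lam * c1 := by rw [bb, hS1]
    have hbbj : bb d j lam = S0 + lam * c0 := by rw [bb]
    have hsum' : bb d (j+1) lam + bb d j lam ≤ mB + mT := by
      rw [← bb_pascal]; exact hsum
    rw [hbbk, hbbj] at hsum'
    rw [hbbk] at hI
    have hTlow : S0 + lam * c0 < mT := by linarith
    have hmT1 : 1 ≤ mT := by
      rcases hmT0 with h | h
      · exfalso
        have := mul_nonneg hl0 hc0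
        rw [h] at hTlow; linarith
      · exact h
    have ihT' := ihT hmT1
    have hidx : j+1+1 = j+2 := rfl
    have hbb2 : ∀ μ : ℝ, bb d (j+1+1) μ = S0 + c0 + c1 + μ * c2 := by
      intro μ; rw [hidx, bb, hS2]
    have hbb1 : ∀ μ : ℝ, bb d (j+1) μ = S0 + c0 + μ * c1 := by
      intro μ; rw [bb, hS1]
    have hbb0 : ∀ μ : ℝ, bb d j μ = S0 + μ * c0 := by
      intro μ; rw [bb]
    rw [hbb2, hbbk]
    have hmaxB := le_max_left NB mT
    have hmaxT := le_max_right NT mB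
    have hmaxB2 := le_max_right NB mT
    have hmaxT2 := le_max_left NT mB
    by_cases hT2 : S0 + c0 ≤ mT
    · -- Case II.1 : both slices at least S0 + c0
      have hB2 : S0 + c0 ≤ mB := le_trans hT2 hTB
      have hc1pos : 0 < c1 := by
        rcases hc1.lt_or_eq with h | h
        · exact h
        · exfalso; rw [← h] at hI; linarith
      set μb : ℝ := (mB - (S0 + c0)) / c1 with hμbd
      set μt : ℝ := (mT - (S0 + c0)) / c1 with hμtd
      have hμbc : μb * c1 = mB - (S0 + c0) := div_mul_cancel₀ _ (ne_of_gt hc1pos)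
      have hμtc : μt * c1 = mT - (S0 + c0) := div_mul_cancel₀ _ (ne_of_gt hc1pos)
      have hμb0 : 0 ≤ μb := by apply div_nonneg; linarith; linarith
      have hμt0 : 0 ≤ μt := by apply div_nonneg; linarith; linarith
      have hμb1 : μb < lam := by rw [div_lt_iff₀ hc1pos]; linarith
      have hμt1 : μt < lam := by rw [div_lt_iff₀ hc1pos]; linarith
      have hNB := ihB (j+1) μb hμb0 (lt_trans hμb1 hl1) (le_of_eq (by rw [hbb1]; linarith))
      have hNT := ihT' (j+1) μt hμt0 (lt_trans hμt1 hl1) (le_of_eq (by rw [hbb1]; linarith))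
      rw [hbb2] at hNB hNT
      have hknow : lam * c1 - μb * c1 - μt * c1 ≤ c0 - lam * c0 := by linarith
      have t3 : (lam * c2 - μb * c2 - μt * c2) * c1 ≤ (c1 - lam * c1) * c1 := by
        calc (lam * c2 - μb * c2 - μt * c2) * c1
            = (lam * c1 - μb * c1 - μt * c1) * c2 := by ring
          _ ≤ (c0 - lam * c0) * c2 := mul_le_mul_of_nonneg_right hknow hc2
          _ = (1 - lam) * (c0 * c2) := by ring
          _ ≤ (1 - lam) * (c1 * c1) := mul_le_mul_of_nonneg_left hlc (by linarith)
          _ = (c1 - lam * c1) * c1 := by ring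
      have hfin := le_of_mul_le_mul_right t3 hc1pos
      linarith
    · push_neg at hT2
      have hc0pos : 0 < c0 := by
        have := mul_nonneg hl0 hc0
        linarith
      set μt : ℝ := (mT - S0) / c0 with hμtd
      have hμtc : μt * c0 = mT - S0 := div_mul_cancel₀ _ (ne_of_gt hc0pos)
      have hμtlam : lam < μt := by rw [lt_div_iff₀ hc0pos]; linarith
      have hμt0 : 0 ≤ μt := le_of_lt (lt_of_le_of_lt hl0 hμtlam)
      have hμt1 : μt < 1 := by rw [div_lt_iff₀ hc0pos]; linarith
      have hNT := ihT' j μt hμt0 hμt1 (le_of_eq (by rw [hbb0]; linarith))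
      rw [hbb1] at hNT
      by_cases hB2 : S0 + c0 ≤ mB
      · -- II.2.a
        have hc1pos : 0 < c1 := by
          rcases hc1.lt_or_eq with h | h
          · exact h
          · exfalso; rw [← h] at hI; linarith
        set μb : ℝ := (mB - (S0 + c0)) / c1 with hμbd
        have hμbc : μb * c1 = mB - (S0 + c0) := div_mul_cancel₀ _ (ne_of_gt hc1pos)
        have hμb0 : 0 ≤ μb := by apply div_nonneg; linarith; linarith
        have hμb1 : μb < lam := by rw [div_lt_iff₀ hc1pos]; linarith
        have hNB := ihB (j+1) μb hμb0 (lt_trans hμb1 hl1) (le_of_eq (by rw [hbb1]; linarith))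
        rw [hbb2] at hNB
        have hknow : lam * c1 - μb * c1 ≤ μt * c0 - lam * c0 := by linarith
        have t3 : (lam * c2 - μb * c2) * c0 ≤ (μt * c1 - lam * c1) * c0 := by
          calc (lam * c2 - μb * c2) * c0
              = (lam - μb) * (c0 * c2) := by ring
            _ ≤ (lam - μb) * (c1 * c1) := mul_le_mul_of_nonneg_left hlc (by linarith)
            _ = (lam * c1 - μb * c1) * c1 := by ring
            _ ≤ (μt * c0 - lam * c0) * c1 := mul_le_mul_of_nonneg_right hknow hc1
            _ = (μt * c1 - lam * c1) * c0 := by ring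
        have hfin := le_of_mul_le_mul_right t3 hc0pos
        linarith
      · -- II.2.b
        push_neg at hB2
        set μb : ℝ := (mB - S0) / c0 with hμbd
        have hμbc : μb * c0 = mB - S0 := div_mul_cancel₀ _ (ne_of_gt hc0pos)
        have hμblam : lam < μb := by rw [lt_div_iff₀ hc0pos]; linarith
        have hμb0 : 0 ≤ μb := le_of_lt (lt_of_le_of_lt hl0 hμblam)
        have hμb1 : μb < 1 := by rw [div_lt_iff₀ hc0pos]; linarith
        have hNB := ihB j μb hμb0 hμb1 (le_of_eq (by rw [hbb0]; linarith))
        rw [hbb1] at hNB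
        have hknow : lam * c1 ≤ μb * c0 + μt * c0 - c0 - lam * c0 := by linarith
        have t3 : (lam * c2) * c0 ≤ (μb * c1 + μt * c1 - c1 - lam * c1) * c0 := by
          calc (lam * c2) * c0
              = lam * (c0 * c2) := by ring
            _ ≤ lam * (c1 * c1) := mul_le_mul_of_nonneg_left hlc hl0
            _ = (lam * c1) * c1 := by ring
            _ ≤ (μb * c0 + μt * c0 - c0 - lam * c0) * c1 := mul_le_mul_of_nonneg_right hknow hc1
            _ = (μb * c1 + μt * c1 - c1 - lam * c1) * c0 := by ring
        have hfin := le_of_mul_le_mul_right t3 hc0pos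
        linarith

/-- one-step / r-step expansion -/
def nbQ (n r : ℕ) (A : Finset (Fin n → Bool)) : Finset (Fin n → Bool) :=
  univ.filter (fun x => ∃ a ∈ A, hammingDist x a ≤ r)

lemma mem_nbQ {n r : ℕ} {A : Finset (Fin n → Bool)} {x : Fin n → Bool} :
    x ∈ nbQ n r A ↔ ∃ a ∈ A, hammingDist x a ≤ r := by
  simp [nbQ]

lemma subset_nbQ {n r : ℕ} (A : Finset (Fin n → Bool)) : A ⊆ nbQ n r A := by
  intro a ha
  exact mem_nbQ.2 ⟨a, ha, by simp⟩

lemma hd_cons {d : ℕ} (b c : Bool) (x y : Fin d → Bool) :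
    hammingDist (Fin.cons b x : Fin (d+1) → Bool) (Fin.cons c y : Fin (d+1) → Bool)
      = (if b = c then 0 else 1) + hammingDist x y := by
  have key : ∀ (m : ℕ) (u v : Fin m → Bool), hammingDist u v = ∑ i, if u i ≠ v i then 1 else 0 := by
    intro m u v
    rw [hammingDist, Finset.card_filter]
  rw [key, key, Fin.sum_univ_succ]
  simp only [Fin.cons_zero, Fin.cons_succ]
  by_cases h : b = c <;> simp [h]

/-- the slc of `A` at last... first coordinate `b` -/
def slc {d : ℕ} (b : Bool) (A : Finset (Fin (d+1) → Bool)) : Finset (Fin d → Bool) :=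
  univ.filter (fun y => (Fin.cons b y : Fin (d+1) → Bool) ∈ A)

lemma mem_slc {d : ℕ} {b : Bool} {A : Finset (Fin (d+1) → Bool)} {y : Fin d → Bool} :
    y ∈ slc b A ↔ (Fin.cons b y : Fin (d+1) → Bool) ∈ A := by simp [slc]

lemma card_slice_add {d : ℕ} (A : Finset (Fin (d+1) → Bool)) :
    A.card = (slc false A).card + (slc true A).card := by
  have h : ∀ b : Bool, (slc b A).card = (A.filter (fun x => x 0 = b)).card := by
    intro b
    apply card_bij (fun (y : Fin d → Bool) _ => (Fin.cons b y : Fin (d+1) → Bool))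
    · intro y hy
      rw [mem_filter]
      exact ⟨mem_slc.1 hy, by simp⟩
    · intro y₁ _ y₂ _ h
      have := congrArg Fin.tail h
      simpa [Fin.tail_cons] using this
    · intro x hx
      rw [mem_filter] at hx
      refine ⟨Fin.tail x, ?_, ?_⟩
      · rw [mem_slc, ← hx.2, Fin.cons_self_tail]
        exact hx.1
      · rw [← hx.2, Fin.cons_self_tail]
  rw [h, h]
  rw [← card_filter_add_card_filter_not (p := fun x => x 0 = false)]
  congr 1
  apply congrArg
  apply Finset.filter_congr
  intro x _
  simp

lemma slc_nb_sub1 {d : ℕ} (b : Bool) (A : Finset (Fin (d+1) → Bool)) :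
    nbQ d 1 (slc b A) ⊆ slc b (nbQ (d+1) 1 A) := by
  intro y hy
  obtain ⟨z, hz, hdz⟩ := mem_nbQ.1 hy
  rw [mem_slc] at hz ⊢
  refine mem_nbQ.2 ⟨(Fin.cons b z : Fin (d+1) → Bool), hz, ?_⟩
  rw [hd_cons]
  simpa using hdz

lemma slc_nb_sub2 {d : ℕ} (b c : Bool) (hbc : b ≠ c) (A : Finset (Fin (d+1) → Bool)) :
    slc c A ⊆ slc b (nbQ (d+1) 1 A) := by
  intro y hy
  rw [mem_slc] at hy ⊢
  refine mem_nbQ.2 ⟨(Fin.cons c y : Fin (d+1) → Bool), hy, ?_⟩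
  rw [hd_cons]
  simp [hbc]

theorem harper_step : ∀ (n : ℕ) (A : Finset (Fin n → Bool)), A.Nonempty →
    ∀ (k : ℕ) (lam : ℝ), 0 ≤ lam → lam < 1 → bb n k lam ≤ (A.card : ℝ) →
      bb n (k+1) lam ≤ ((nbQ n 1 A).card : ℝ) := by
  intro n
  induction n with
  | zero =>
      intro A hA k lam hl0 hl1 hle
      have hA1 : 1 ≤ A.card := hA.card_pos
      have hcard : 1 ≤ (nbQ 0 1 A).card := le_trans hA1 (card_le_card (subset_nbQ A))
      have hsum : ∀ m : ℕ, (∑ i ∈ range (m+1), ((0:ℕ).choose i : ℝ)) = 1 := by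
        intro m
        induction m with
        | zero => simp
        | succ m ihm =>
            rw [sum_range_succ, ihm, Nat.choose_eq_zero_of_lt (Nat.succ_pos m)]
            simp
      have hbb : bb 0 (k+1) lam = 1 := by
        rw [bb, hsum k, Nat.choose_eq_zero_of_lt (Nat.succ_pos k)]
        simp
      rw [hbb]
      exact_mod_cast hcard
  | succ d ih =>
      intro A hA k lam hl0 hl1 hle
      have hsplit : A.card = (slc false A).card + (slc true A).card := card_slice_add A
      have hsplitN : (nbQ (d+1) 1 A).card
          = (slc false (nbQ (d+1) 1 A)).card + (slc true (nbQ (d+1) 1 A)).card :=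
        card_slice_add _
      have hNf1 : (nbQ d 1 (slc false A)).card ≤ (slc false (nbQ (d+1) 1 A)).card :=
        card_le_card (slc_nb_sub1 false A)
      have hNf2 : (slc true A).card ≤ (slc false (nbQ (d+1) 1 A)).card :=
        card_le_card (slc_nb_sub2 false true (by simp) A)
      have hNt1 : (nbQ d 1 (slc true A)).card ≤ (slc true (nbQ (d+1) 1 A)).card :=
        card_le_card (slc_nb_sub1 true A)
      have hNt2 : (slc false A).card ≤ (slc true (nbQ (d+1) 1 A)).card :=
        card_le_card (slc_nb_sub2 true false (by simp) A)
      have hA1 : 1 ≤ A.card := hA.card_pos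
      rcases le_total (slc true A).card (slc false A).card with hbt | hbt
      · have hBfne : (slc false A).Nonempty := by
          rw [← card_pos]; omega
        have hkey := key d k lam ((slc false A).card : ℝ) ((slc true A).card : ℝ)
            ((nbQ d 1 (slc false A)).card : ℝ) ((nbQ d 1 (slc true A)).card : ℝ)
            hl0 hl1 (by exact_mod_cast hBfne.card_pos)
            (by rcases Nat.eq_zero_or_pos (slc true A).card with h | h
                · left; exact_mod_cast h
                · right; exact_mod_cast h)
            (by exact_mod_cast hbt)
            (by rw [← Nat.cast_add, ← hsplit]; exact hle)
            (fun κ μ h0 h1 hκ => ih (slc false A) hBfne κ μ h0 h1 hκ)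
            (fun h1le κ μ h0 h1 hκ =>
              ih (slc true A) (card_pos.mp (by exact_mod_cast h1le)) κ μ h0 h1 hκ)
        refine le_trans hkey ?_
        have m1 : max ((nbQ d 1 (slc false A)).card : ℝ) ((slc true A).card : ℝ)
            ≤ ((slc false (nbQ (d+1) 1 A)).card : ℝ) :=
          max_le (by exact_mod_cast hNf1) (by exact_mod_cast hNf2)
        have m2 : max ((nbQ d 1 (slc true A)).card : ℝ) ((slc false A).card : ℝ)
            ≤ ((slc true (nbQ (d+1) 1 A)).card : ℝ) :=
          max_le (by exact_mod_cast hNt1) (by exact_mod_cast hNt2)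
        have : ((nbQ (d+1) 1 A).card : ℝ)
            = ((slc false (nbQ (d+1) 1 A)).card : ℝ) + ((slc true (nbQ (d+1) 1 A)).card : ℝ) := by
          exact_mod_cast congrArg (Nat.cast : ℕ → ℝ) hsplitN
        linarith
      · have hBtne : (slc true A).Nonempty := by
          rw [← card_pos]; omega
        have hkey := key d k lam ((slc true A).card : ℝ) ((slc false A).card : ℝ)
            ((nbQ d 1 (slc true A)).card : ℝ) ((nbQ d 1 (slc false A)).card : ℝ)
            hl0 hl1 (by exact_mod_cast hBtne.card_pos)
            (by rcases Nat.eq_zero_or_pos (slc false A).card with h | h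
                · left; exact_mod_cast h
                · right; exact_mod_cast h)
            (by exact_mod_cast hbt)
            (by rw [← Nat.cast_add, Nat.add_comm ((slc true A).card) ((slc false A).card), ← hsplit]; exact hle)
            (fun κ μ h0 h1 hκ => ih (slc true A) hBtne κ μ h0 h1 hκ)
            (fun h1le κ μ h0 h1 hκ =>
              ih (slc false A) (card_pos.mp (by exact_mod_cast h1le)) κ μ h0 h1 hκ)
        refine le_trans hkey ?_
        have m1 : max ((nbQ d 1 (slc true A)).card : ℝ) ((slc false A).card : ℝ)
            ≤ ((slc true (nbQ (d+1) 1 A)).card : ℝ) :=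
          max_le (by exact_mod_cast hNt1) (by exact_mod_cast hNt2)
        have m2 : max ((nbQ d 1 (slc false A)).card : ℝ) ((slc true A).card : ℝ)
            ≤ ((slc false (nbQ (d+1) 1 A)).card : ℝ) :=
          max_le (by exact_mod_cast hNf1) (by exact_mod_cast hNf2)
        have : ((nbQ (d+1) 1 A).card : ℝ)
            = ((slc false (nbQ (d+1) 1 A)).card : ℝ) + ((slc true (nbQ (d+1) 1 A)).card : ℝ) := by
          exact_mod_cast congrArg (Nat.cast : ℕ → ℝ) hsplitN
        linarith

lemma harper_iter (n : ℕ) (A : Finset (Fin n → Bool)) (hA : A.Nonempty) (k : ℕ) (lam : ℝ)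
    (hl0 : 0 ≤ lam) (hl1 : lam < 1) (h : bb n k lam ≤ (A.card : ℝ)) :
    ∀ r : ℕ, bb n (k+r) lam ≤ ((nbQ n r A).card : ℝ) := by
  intro r
  induction r with
  | zero =>
      refine le_trans h ?_
      exact_mod_cast card_le_card (subset_nbQ A)
  | succ r ihr =>
      have hne : (nbQ n r A).Nonempty := hA.mono (subset_nbQ A)
      have hstep := harper_step n (nbQ n r A) hne (k+r) lam hl0 hl1 ihr
      have hsub : nbQ n 1 (nbQ n r A) ⊆ nbQ n (r+1) A := by
        intro x hx
        obtain ⟨y, hy, hxy⟩ := mem_nbQ.1 hx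
        obtain ⟨a, ha, hya⟩ := mem_nbQ.1 hy
        exact mem_nbQ.2 ⟨a, ha, le_trans (hammingDist_triangle x y a) (by omega)⟩
      have : bb n (k+(r+1)) lam = bb n ((k+r)+1) lam := by
        rw [← Nat.add_assoc]
      rw [this]
      exact le_trans hstep (by exact_mod_cast card_le_card hsub)

/-- Expansion lower bound for any set in the hypercube (Harper/Nigmatullin). -/
theorem expansion_ge_BSize (n k : ℕ) (lam : ℝ) (hk : k ≤ n)
    (hlam0 : 0 ≤ lam) (hlam1 : lam < 1)
    (A : Finset (Fin n → Bool)) (hA : A.Nonempty)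
    (hvol : (A.card : ℝ) / 2 ^ n = BSize n k lam) :
    ∀ r : ℕ,
      BSize n (k + r) lam ≤
        (Nat.card {x : Fin n → Bool // ∃ a ∈ A, hammingDist x a ≤ r} : ℝ) / 2 ^ n := by
  intro r
  have h2 : (0:ℝ) < 2 ^ n := by positivity
  have hAcard : bb n k lam ≤ (A.card : ℝ) := by
    have h1 : (A.card : ℝ) = 2 ^ n * BSize n k lam := by
      rw [← hvol]; field_simp
    rw [h1, BSize, ← mul_assoc, mul_inv_cancel₀ (ne_of_gt h2), one_mul, bb]
  have hiter := harper_iter n A hA k lam hlam0 hlam1 hAcard r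
  have hcardeq : (Nat.card {x : Fin n → Bool // ∃ a ∈ A, hammingDist x a ≤ r}) = (nbQ n r A).card := by
    rw [Nat.card_eq_fintype_card, nbQ]
    exact Fintype.card_subtype _
  rw [hcardeq, BSize, inv_mul_eq_div, ← bb]
  gcongr
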